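/- (Boundary cluster identity for the extremal index functional.) Let d ≥ 1, let x : ℤ → ℝ^d, let r be a positive integer and call an index t an exceedance if ‖x_t‖ > 1. For j = 1,2,3,4 let I_j = {(j−1)r+1, …, jr}. Suppose there is no exceedance in I_1 ∪ I_4 and at least one exceedance in each of I_2 and I_3; let T_min^2, T_max^2 be the smallest and largest exceedance indices in I_2 and T_min^3, T_max^3 those in I_3. Then Σ_{i ∈ I_1 ∪ I_2 ∪ I_3} 1{there exists t ∈ {i, …, i+r−1} with ‖x_t‖ > 1} = r + (T_max^3 − T_min^2) − max(T_min^3 − T_max^2 − r, 0). -/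

import Mathlib

/-- Boundary cluster identity for the extremal index functional.
If there is no exceedance in I₁ = {1,…,r} and I₄ = {3r+1,…,4r}, and at least one
exceedance in each of I₂ = {r+1,…,2r} and I₃ = {2r+1,…,3r}, then the number of windows
{i,…,i+r−1}, i ∈ I₁ ∪ I₂ ∪ I₃, containing an exceedance equals
r + (Tmax³ − Tmin²) − max(Tmin³ − Tmax² − r, 0). -/
theorem stmt_18
    {d : ℕ} (hd : 1 ≤ d) (x : ℤ → (Fin d → ℝ)) (r : ℕ) (hr : 0 < r)
    (hno : ∀ t : ℤ, ((1 ≤ t ∧ t ≤ (r : ℤ)) ∨ (3 * (r : ℤ) + 1 ≤ t ∧ t ≤ 4 * (r : ℤ))) →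
      ‖x t‖ ≤ 1)
    (hyes2 : ∃ t : ℤ, (r : ℤ) + 1 ≤ t ∧ t ≤ 2 * (r : ℤ) ∧ ‖x t‖ > 1)
    (hyes3 : ∃ t : ℤ, 2 * (r : ℤ) + 1 ≤ t ∧ t ≤ 3 * (r : ℤ) ∧ ‖x t‖ > 1) :
    ∑ i ∈ Finset.Icc (1 : ℤ) (3 * (r : ℤ)),
        Set.indicator {i : ℤ | ∃ t : ℤ, i ≤ t ∧ t ≤ i + (r : ℤ) - 1 ∧ ‖x t‖ > 1}
          (fun _ => (1 : ℤ)) i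
      = (r : ℤ)
          + (sSup {t : ℤ | 2 * (r : ℤ) + 1 ≤ t ∧ t ≤ 3 * (r : ℤ) ∧ ‖x t‖ > 1}
              - sInf {t : ℤ | (r : ℤ) + 1 ≤ t ∧ t ≤ 2 * (r : ℤ) ∧ ‖x t‖ > 1})
          - max (sInf {t : ℤ | 2 * (r : ℤ) + 1 ≤ t ∧ t ≤ 3 * (r : ℤ) ∧ ‖x t‖ > 1}
              - sSup {t : ℤ | (r : ℤ) + 1 ≤ t ∧ t ≤ 2 * (r : ℤ) ∧ ‖x t‖ > 1}
              - (r : ℤ)) 0 := by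
  classical
  set S2 : Set ℤ := {t : ℤ | (r : ℤ) + 1 ≤ t ∧ t ≤ 2 * (r : ℤ) ∧ ‖x t‖ > 1} with hS2def
  set S3 : Set ℤ := {t : ℤ | 2 * (r : ℤ) + 1 ≤ t ∧ t ≤ 3 * (r : ℤ) ∧ ‖x t‖ > 1} with hS3def
  have hne2 : S2.Nonempty := by
    obtain ⟨t, h1, h2, h3⟩ := hyes2; exact ⟨t, h1, h2, h3⟩
  have hne3 : S3.Nonempty := by
    obtain ⟨t, h1, h2, h3⟩ := hyes3; exact ⟨t, h1, h2, h3⟩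
  have hbl2 : BddBelow S2 := ⟨(r : ℤ) + 1, fun t ht => ht.1⟩
  have hbu2 : BddAbove S2 := ⟨2 * (r : ℤ), fun t ht => ht.2.1⟩
  have hbl3 : BddBelow S3 := ⟨2 * (r : ℤ) + 1, fun t ht => ht.1⟩
  have hbu3 : BddAbove S3 := ⟨3 * (r : ℤ), fun t ht => ht.2.1⟩
  set a := sInf S2 with ha
  set b := sSup S2 with hb
  set c := sInf S3 with hc
  set e := sSup S3 with he
  have haS : a ∈ S2 := Int.csInf_mem hne2 hbl2
  have hbS : b ∈ S2 := Int.csSup_mem hne2 hbu2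
  have hcS : c ∈ S3 := Int.csInf_mem hne3 hbl3
  have heS : e ∈ S3 := Int.csSup_mem hne3 hbu3
  have hab : a ≤ b := csInf_le hbl2 hbS
  have hce : c ≤ e := csInf_le hbl3 heS
  have ha1 : (r : ℤ) + 1 ≤ a := haS.1
  have hb2 : b ≤ 2 * (r : ℤ) := hbS.2.1
  have hc1 : 2 * (r : ℤ) + 1 ≤ c := hcS.1
  have he2 : e ≤ 3 * (r : ℤ) := heS.2.1
  -- rewrite the sum as a cardinality of a filter
  have hsum : ∑ i ∈ Finset.Icc (1 : ℤ) (3 * (r : ℤ)),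
      Set.indicator {i : ℤ | ∃ t : ℤ, i ≤ t ∧ t ≤ i + (r : ℤ) - 1 ∧ ‖x t‖ > 1}
        (fun _ => (1 : ℤ)) i
      = ((Finset.Icc (1 : ℤ) (3 * (r : ℤ))).filter
          (fun i => ∃ t : ℤ, i ≤ t ∧ t ≤ i + (r : ℤ) - 1 ∧ ‖x t‖ > 1)).card := by
    rw [Finset.sum_indicator_eq_sum_filter]
    simp [Set.mem_setOf_eq]
  have hfilter : ((Finset.Icc (1 : ℤ) (3 * (r : ℤ))).filter
          (fun i => ∃ t : ℤ, i ≤ t ∧ t ≤ i + (r : ℤ) - 1 ∧ ‖x t‖ > 1))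
      = Finset.Icc (a - (r : ℤ) + 1) b ∪ Finset.Icc (c - (r : ℤ) + 1) e := by
    ext i
    simp only [Finset.mem_filter, Finset.mem_Icc, Finset.mem_union]
    constructor
    · rintro ⟨⟨hi1, hi2⟩, t, ht1, ht2, htx⟩
      have htlo : (r : ℤ) + 1 ≤ t := by
        by_contra hcon; push_neg at hcon
        exact absurd (hno t (Or.inl ⟨by omega, by omega⟩)) (by linarith)
      have hthi : t ≤ 3 * (r : ℤ) := by
        by_contra hcon; push_neg at hcon
        exact absurd (hno t (Or.inr ⟨by omega, by omega⟩)) (by linarith)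
      rcases le_or_gt t (2 * (r : ℤ)) with h2 | h2
      · have htS : t ∈ S2 := ⟨htlo, h2, htx⟩
        have h3 : a ≤ t := csInf_le hbl2 htS
        have h4 : t ≤ b := le_csSup hbu2 htS
        left; omega
      · have htS : t ∈ S3 := ⟨by omega, hthi, htx⟩
        have h3 : c ≤ t := csInf_le hbl3 htS
        have h4 : t ≤ e := le_csSup hbu3 htS
        right; omega
    · rintro (⟨h1, h2⟩ | ⟨h1, h2⟩)
      · refine ⟨⟨by omega, by omega⟩, ?_⟩
        rcases le_or_gt i a with h | h
        · exact ⟨a, h, by omega, haS.2.2⟩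
        · exact ⟨b, by omega, by omega, hbS.2.2⟩
      · refine ⟨⟨by omega, by omega⟩, ?_⟩
        rcases le_or_gt i c with h | h
        · exact ⟨c, h, by omega, hcS.2.2⟩
        · exact ⟨e, by omega, by omega, heS.2.2⟩
  rw [hsum, hfilter]
  rcases le_or_gt (c - b) (r : ℤ) with hcase | hcase
  · have hmax : max (c - b - (r : ℤ)) 0 = 0 := max_eq_right (by omega)
    have hunion : Finset.Icc (a - (r : ℤ) + 1) b ∪ Finset.Icc (c - (r : ℤ) + 1) e
        = Finset.Icc (a - (r : ℤ) + 1) e := by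
      ext i
      simp only [Finset.mem_union, Finset.mem_Icc]
      omega
    rw [hunion, hmax, Int.card_Icc]
    have : (e + 1 - (a - (r : ℤ) + 1)).toNat = (e - a + r).toNat := by ring_nf
    rw [this, Int.toNat_of_nonneg (by omega)]
    ring
  · have hmax : max (c - b - (r : ℤ)) 0 = c - b - (r : ℤ) := max_eq_left (by omega)
    have hdisj : Disjoint (Finset.Icc (a - (r : ℤ) + 1) b) (Finset.Icc (c - (r : ℤ) + 1) e) := by
      rw [Finset.disjoint_left]
      intro i hi hi'
      simp only [Finset.mem_Icc] at hi hi'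
      omega
    rw [Finset.card_union_of_disjoint hdisj, hmax, Nat.cast_add, Int.card_Icc, Int.card_Icc]
    rw [Int.toNat_of_nonneg (by omega), Int.toNat_of_nonneg (by omega)]
    ring
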